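/- Cosmological time of the Minkowski upper half-space: Let M = {p ∈ ℝ × ℝⁿ : p₀ > 0} (n ≥ 1). For p ∈ M define the cosmological time τ_AGH(p) as the supremum of Lorentzian lengths L(c) = ∫₀¹ √(c₀'(s)² − ‖c̄'(s)‖²) ds over all C¹ curves c : [0,1] → ℝ × ℝⁿ with image contained in M, c(1) = p, that are future timelike, i.e. c₀'(s) > ‖c̄'(s)‖ for all s ∈ [0,1]. Then τ_AGH(p) = p₀ for every p ∈ M. -/

import Mathlib

open Real Set intervalIntegral

lemma hasDerivWithinAt_fst' {E : Type*} [NormedAddCommGroup E] [NormedSpace ℝ E]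
    {c : ℝ → ℝ × E} {v : ℝ × E} {s : Set ℝ} {x : ℝ}
    (h : HasDerivWithinAt c v s x) : HasDerivWithinAt (fun t => (c t).1) v.1 s x := by
  have := h.hasFDerivWithinAt.fst.hasDerivWithinAt
  simpa using this

/-- Cosmological time of the Minkowski upper half-space.  For
`p ∈ M = {p₀ > 0} ⊆ ℝ × ℝⁿ` (n ≥ 1), the supremum of Lorentzian lengths
`∫₀¹ √(c₀'(s)² − ‖c̄'(s)‖²) ds` over all C¹ future timelike curves `c : [0,1] → M`
ending at `p` equals `p₀`. -/
theorem cosmologicalTime_upper_halfspace (n : ℕ) (hn : 1 ≤ n)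
    (p : ℝ × EuclideanSpace ℝ (Fin n)) (hp : 0 < p.1) :
    sSup {L : ℝ | ∃ c c' : ℝ → ℝ × EuclideanSpace ℝ (Fin n),
      (∀ s ∈ Set.Icc (0:ℝ) 1, HasDerivWithinAt c (c' s) (Set.Icc (0:ℝ) 1) s) ∧
      ContinuousOn c' (Set.Icc (0:ℝ) 1) ∧
      (∀ s ∈ Set.Icc (0:ℝ) 1, 0 < (c s).1) ∧
      c 1 = p ∧
      (∀ s ∈ Set.Icc (0:ℝ) 1, ‖(c' s).2‖ < (c' s).1) ∧
      L = ∫ s in (0:ℝ)..1, Real.sqrt (((c' s).1) ^ 2 - ‖(c' s).2‖ ^ 2)} = p.1 := by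
  set S := {L : ℝ | ∃ c c' : ℝ → ℝ × EuclideanSpace ℝ (Fin n),
      (∀ s ∈ Set.Icc (0:ℝ) 1, HasDerivWithinAt c (c' s) (Set.Icc (0:ℝ) 1) s) ∧
      ContinuousOn c' (Set.Icc (0:ℝ) 1) ∧
      (∀ s ∈ Set.Icc (0:ℝ) 1, 0 < (c s).1) ∧
      c 1 = p ∧
      (∀ s ∈ Set.Icc (0:ℝ) 1, ‖(c' s).2‖ < (c' s).1) ∧
      L = ∫ s in (0:ℝ)..1, Real.sqrt (((c' s).1) ^ 2 - ‖(c' s).2‖ ^ 2)} with hS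
  -- membership of every t ∈ (0, p.1)
  have hmem : ∀ t : ℝ, 0 < t → t < p.1 → t ∈ S := by
    intro t ht htp
    refine ⟨fun s => (p.1 - t + s * t, p.2), fun _ => (t, 0), ?_, ?_, ?_, ?_, ?_, ?_⟩
    · intro s hs
      have h1 : HasDerivWithinAt (fun s : ℝ => p.1 - t + s * t) t (Icc 0 1) s := by
        simpa using (((hasDerivAt_id s).mul_const t).const_add (p.1 - t)).hasDerivWithinAt
          (s := Icc 0 1)
      exact h1.prodMk (hasDerivWithinAt_const s _ p.2)
    · exact continuousOn_const
    · intro s hs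
      have : 0 ≤ s * t := mul_nonneg hs.1 ht.le
      simp only
      linarith
    · simp
    · intro s hs; simpa using ht
    · simp [Real.sqrt_sq ht.le]
  -- upper bound
  have hub : ∀ L ∈ S, L ≤ p.1 := by
    rintro L ⟨c, c', hderiv, hcont, hpos, hend, htime, rfl⟩
    have h01 : (0:ℝ) ≤ 1 := zero_le_one
    have hcont1 : ContinuousOn (fun s => (c' s).1) (Icc 0 1) :=
      (continuous_fst.comp_continuousOn hcont)
    have hcontInteg : ContinuousOn
        (fun s => Real.sqrt (((c' s).1) ^ 2 - ‖(c' s).2‖ ^ 2)) (Icc 0 1) :=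
      Real.continuous_sqrt.comp_continuousOn
        ((hcont1.pow 2).sub (((continuous_snd.comp_continuousOn hcont).norm).pow 2))
    have hle : ∀ s ∈ Icc (0:ℝ) 1,
        Real.sqrt (((c' s).1) ^ 2 - ‖(c' s).2‖ ^ 2) ≤ (c' s).1 := by
      intro s hs
      have h1 : 0 ≤ (c' s).1 := (norm_nonneg _).trans (htime s hs).le
      calc Real.sqrt (((c' s).1) ^ 2 - ‖(c' s).2‖ ^ 2)
          ≤ Real.sqrt (((c' s).1) ^ 2) :=
            Real.sqrt_le_sqrt (by nlinarith [norm_nonneg (c' s).2])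
        _ = (c' s).1 := Real.sqrt_sq h1
    have hint1 : IntervalIntegrable (fun s => (c' s).1) MeasureTheory.volume 0 1 :=
      hcont1.intervalIntegrable_of_Icc h01
    have hint2 : IntervalIntegrable
        (fun s => Real.sqrt (((c' s).1) ^ 2 - ‖(c' s).2‖ ^ 2))
        MeasureTheory.volume 0 1 := hcontInteg.intervalIntegrable_of_Icc h01
    have hmono : (∫ s in (0:ℝ)..1, Real.sqrt (((c' s).1) ^ 2 - ‖(c' s).2‖ ^ 2))
        ≤ ∫ s in (0:ℝ)..1, (c' s).1 :=
      intervalIntegral.integral_mono_on h01 hint2 hint1 hle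
    -- FTC for the first component
    have hftc : (∫ s in (0:ℝ)..1, (c' s).1) = (c 1).1 - (c 0).1 := by
      apply intervalIntegral.integral_eq_sub_of_hasDeriv_right_of_le h01
        (f := fun s => (c s).1) (f' := fun s => (c' s).1)
      · exact fun s hs => (hasDerivWithinAt_fst' (hderiv s hs)).continuousWithinAt
      · intro s hs
        have hmem' : Icc (0:ℝ) 1 ∈ nhds s := Icc_mem_nhds hs.1 hs.2
        exact ((hasDerivWithinAt_fst' (hderiv s (Ioo_subset_Icc_self hs))).hasDerivAt
          hmem').hasDerivWithinAt
      · exact hint1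
    have h0 : 0 < (c 0).1 := hpos 0 ⟨le_refl 0, zero_le_one⟩
    rw [hftc, hend] at hmono
    linarith
  apply le_antisymm
  · exact Real.sSup_le hub hp.le
  · refine le_of_forall_lt fun x hx => ?_
    have hbdd : BddAbove S := ⟨p.1, hub⟩
    set t := (max x 0 + p.1) / 2 with htdef
    have h1 : max x 0 < p.1 := max_lt hx hp
    have ht0 : 0 < t := by
      have : (0:ℝ) ≤ max x 0 := le_max_right x 0
      rw [htdef]; linarith
    have htp : t < p.1 := by rw [htdef]; linarith
    have hxt : x < t := by
      have : x ≤ max x 0 := le_max_left x 0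
      rw [htdef]; linarith
    exact lt_of_lt_of_le hxt (le_csSup hbdd (hmem t ht0 htp))
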